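/- For every positive integer n, the d-cube 2^n (the n-fold direct product of the two-element chain 2 = {0 < 1}) has dimension exactly n. -/

import Mathlib

universe u

/-- The order dimension of a poset: the least cardinal `κ` such that the partial
order is the intersection of `κ` linear orderings (each extending it). -/
noncomputable def orderDim (α : Type u) [PartialOrder α] : Cardinal.{u} :=
  sInf {κ : Cardinal.{u} | ∃ (ι : Type u) (r : ι → α → α → Prop),
    (∀ i, IsLinearOrder α (r i)) ∧
    (∀ x y : α, x ≤ y ↔ ∀ i, r i x y) ∧
    Cardinal.mk ι = κ}

/-- The `i`-th linear extension in the standard realizer of the cube. -/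
def cubeRel (n : ℕ) (i : Fin n) (x y : Fin n → Bool) : Prop :=
  x i < y i ∨ (x i = y i ∧ toLinearExtension x ≤ toLinearExtension y)

lemma cubeRel_linear (n : ℕ) (i : Fin n) : IsLinearOrder (Fin n → Bool) (cubeRel n i) := by
  have hrefl : ∀ x, cubeRel n i x x := fun x => Or.inr ⟨rfl, le_refl _⟩
  have htrans : ∀ x y z, cubeRel n i x y → cubeRel n i y z → cubeRel n i x z := by
    rintro x y z (h1 | ⟨h1, h1'⟩) (h2 | ⟨h2, h2'⟩)
    · exact Or.inl (h1.trans h2)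
    · exact Or.inl (h2 ▸ h1)
    · exact Or.inl (h1 ▸ h2)
    · exact Or.inr ⟨h1.trans h2, h1'.trans h2'⟩
  have hanti : ∀ x y, cubeRel n i x y → cubeRel n i y x → x = y := by
    rintro x y (h1 | ⟨h1, h1'⟩) (h2 | ⟨h2, h2'⟩)
    · exact absurd (h1.trans h2) (lt_irrefl _)
    · exact absurd h1 (h2 ▸ lt_irrefl _)
    · exact absurd h2 (h1 ▸ lt_irrefl _)
    · exact (le_antisymm h1' h2' : toLinearExtension x = toLinearExtension y)
  have htot : ∀ x y, cubeRel n i x y ∨ cubeRel n i y x := by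
    intro x y
    rcases lt_trichotomy (x i) (y i) with h | h | h
    · exact Or.inl (Or.inl h)
    · rcases le_total (toLinearExtension x) (toLinearExtension y) with h' | h'
      · exact Or.inl (Or.inr ⟨h, h'⟩)
      · exact Or.inr (Or.inr ⟨h.symm, h'⟩)
    · exact Or.inr (Or.inl h)
  exact { refl := hrefl, trans := htrans, antisymm := hanti, total := htot }

lemma cubeRel_realizer (n : ℕ) (x y : Fin n → Bool) : x ≤ y ↔ ∀ i, cubeRel n i x y := by
  constructor
  · intro hxy i
    rcases lt_or_eq_of_le (hxy i) with h | h
    · exact Or.inl h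
    · exact Or.inr ⟨h, toLinearExtension.monotone hxy⟩
  · intro h i
    rcases h i with h' | ⟨h', _⟩
    · exact le_of_lt h'
    · exact le_of_eq h'

theorem stmt9 (n : ℕ) (hn : 0 < n) : orderDim (Fin n → Bool) = n := by
  classical
  apply le_antisymm
  · exact csInf_le' ⟨Fin n, cubeRel n, cubeRel_linear n, cubeRel_realizer n, Cardinal.mk_fin n⟩
  · apply le_csInf
    · exact ⟨n, Fin n, cubeRel n, cubeRel_linear n, cubeRel_realizer n, Cardinal.mk_fin n⟩
    · rintro κ ⟨ι, r, hlin, hiff, rfl⟩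
      set a : Fin n → (Fin n → Bool) := fun i j => decide (j = i) with ha
      set b : Fin n → (Fin n → Bool) := fun i j => decide (j ≠ i) with hb
      have hab : ∀ i j : Fin n, i ≠ j → a i ≤ b j := by
        intro i j hij k
        by_cases h1 : k = i
        · subst h1
          simp [ha, hb, hij]
        · simp [ha, hb, h1]
      have hnab : ∀ i : Fin n, ¬ a i ≤ b i := by
        intro i h
        have := h i
        simp [ha, hb] at this
        exact absurd this (by simp)
      have hex : ∀ i : Fin n, ∃ k, ¬ r k (a i) (b i) := by
        intro i
        by_contra h
        push_neg at h
        exact hnab i ((hiff (a i) (b i)).2 h)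
      choose f hf using hex
      have hinj : Function.Injective f := by
        intro i j hij
        by_contra hne
        have hbiai : r (f i) (b i) (a i) :=
          ((hlin (f i)).toTotal.total _ _).resolve_left (hf i)
        have hbjaj : r (f i) (b j) (a j) := by
          rw [hij]; exact ((hlin (f j)).toTotal.total _ _).resolve_left (hf j)
        have h1 : r (f i) (a i) (b j) := (hiff _ _).1 (hab i j hne) (f i)
        have h2 : r (f i) (a j) (b i) := (hiff _ _).1 (hab j i (Ne.symm hne)) (f i)
        have htrans := (hlin (f i)).toIsPartialOrder.toIsPreorder.toIsTrans
        have hbibj : r (f i) (b i) (b j) := htrans.trans _ _ _ hbiai h1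
        have hbjbi : r (f i) (b j) (b i) := htrans.trans _ _ _ hbjaj h2
        have hbb : b i = b j :=
          (hlin (f i)).toIsPartialOrder.toAntisymm.antisymm _ _ hbibj hbjbi
        have := congrFun hbb i
        simp [hb, Ne.symm hne] at this
        exact hne this
      calc (n : Cardinal) = Cardinal.mk (Fin n) := (Cardinal.mk_fin n).symm
        _ ≤ Cardinal.mk ι := Cardinal.mk_le_of_injective hinj
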